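/- Let R be a Frobenius algebra over a field k equipped with an algebra augmentation ε : R → k. Then the space of left integrals ∫^l_R = {h ∈ R : yh = ε(y)h for all y ∈ R} is one-dimensional over k, and similarly for right integrals. -/
import Mathlib

/-- A linear functional `φ : R → k` is a Frobenius form if the associated bilinear form
`(a, b) ↦ φ (a * b)` is nondegenerate on both sides. -/
def IsFrobeniusForm (k : Type*) {R : Type*} [Field k] [Ring R] [Algebra k R]
    (φ : R →ₗ[k] k) : Prop :=
  (∀ a : R, a ≠ 0 → ∃ b : R, φ (a * b) ≠ 0) ∧ (∀ a : R, a ≠ 0 → ∃ b : R, φ (b * a) ≠ 0)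

variable {k R : Type*} [Field k] [Ring R] [Algebra k R]

/-- The `k`-subspace of left integrals of an augmented algebra `ε : R → k`:
elements `h` with `y * h = ε(y) • h` for all `y`. -/
def leftIntegrals (ε : R →ₐ[k] k) : Submodule k R where
  carrier := {h : R | ∀ y : R, y * h = ε y • h}
  add_mem' := by
    intro a b ha hb y
    simp [mul_add, ha y, hb y, smul_add]
  zero_mem' := by intro y; simp
  smul_mem' := by
    intro c x hx y
    rw [mul_smul_comm, hx y, smul_comm]

/-- The `k`-subspace of right integrals of an augmented algebra `ε : R → k`:
elements `h` with `h * y = ε(y) • h` for all `y`. -/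
def rightIntegrals (ε : R →ₐ[k] k) : Submodule k R where
  carrier := {h : R | ∀ y : R, h * y = ε y • h}
  add_mem' := by
    intro a b ha hb y
    simp [add_mul, ha y, hb y, smul_add]
  zero_mem' := by intro y; simp
  smul_mem' := by
    intro c x hx y
    rw [smul_mul_assoc, hx y, smul_comm]

lemma eps_toLinearMap_ne_zero (ε : R →ₐ[k] k) : ε.toLinearMap ≠ 0 := by
  intro h
  have := LinearMap.congr_fun h 1
  simp at this

lemma left_integrals_finrank [FiniteDimensional k R] (φ : R →ₗ[k] k)
    (hr : ∀ a : R, a ≠ 0 → ∃ b : R, φ (b * a) ≠ 0) (ε : R →ₐ[k] k) :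
    Module.finrank k (leftIntegrals ε) = 1 := by
  set Φ : R →ₗ[k] Module.Dual k R :=
    (LinearMap.llcomp k R R k φ).comp (LinearMap.mul k R).flip with hΦ
  have happ : ∀ h x : R, Φ h x = φ (x * h) := fun h x => rfl
  have hinj : Function.Injective Φ := by
    rw [← LinearMap.ker_eq_bot, LinearMap.ker_eq_bot']
    intro h hh
    by_contra hne
    obtain ⟨b, hb⟩ := hr h hne
    exact hb (by simpa [happ] using LinearMap.congr_fun hh b)
  have hsurj : Function.Surjective Φ :=
    (LinearMap.injective_iff_surjective_of_finrank_eq_finrank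
      (Subspace.dual_finrank_eq (K := k) (V := R)).symm).mp hinj
  have hmap : Submodule.map Φ (leftIntegrals ε) = Submodule.span k {ε.toLinearMap} := by
    apply le_antisymm
    · rintro f ⟨h, hh, rfl⟩
      rw [Submodule.mem_span_singleton]
      refine ⟨φ h, ?_⟩
      ext y
      simp [happ, hh y, mul_comm]
    · rw [Submodule.span_le, Set.singleton_subset_iff]
      obtain ⟨h, hh⟩ := hsurj ε.toLinearMap
      refine ⟨h, fun y => ?_, hh⟩
      have key : ∀ x : R, φ (x * (y * h)) = φ (x * (ε y • h)) := by
        intro x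
        have h1 : φ ((x * y) * h) = ε (x * y) := LinearMap.congr_fun hh (x * y)
        have h2 : φ (x * h) = ε x := LinearMap.congr_fun hh x
        rw [← mul_assoc, h1, map_mul, mul_smul_comm, map_smul, h2, smul_eq_mul, mul_comm]
      by_contra hne
      obtain ⟨b, hb⟩ := hr _ (sub_ne_zero.mpr hne)
      apply hb
      rw [mul_sub, map_sub, key b, sub_self]
  have hεne : (ε : R →ₐ[k] k).toLinearMap ≠ 0 := eps_toLinearMap_ne_zero ε
  calc Module.finrank k (leftIntegrals ε)
      = Module.finrank k (Submodule.map Φ (leftIntegrals ε)) :=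
        (Submodule.equivMapOfInjective Φ hinj _).finrank_eq
    _ = 1 := by rw [hmap, finrank_span_singleton hεne]

lemma right_integrals_finrank [FiniteDimensional k R] (φ : R →ₗ[k] k)
    (hl : ∀ a : R, a ≠ 0 → ∃ b : R, φ (a * b) ≠ 0) (ε : R →ₐ[k] k) :
    Module.finrank k (rightIntegrals ε) = 1 := by
  set Φ : R →ₗ[k] Module.Dual k R :=
    (LinearMap.llcomp k R R k φ).comp (LinearMap.mul k R) with hΦ
  have happ : ∀ h x : R, Φ h x = φ (h * x) := fun h x => rfl
  have hinj : Function.Injective Φ := by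
    rw [← LinearMap.ker_eq_bot, LinearMap.ker_eq_bot']
    intro h hh
    by_contra hne
    obtain ⟨b, hb⟩ := hl h hne
    exact hb (by simpa [happ] using LinearMap.congr_fun hh b)
  have hsurj : Function.Surjective Φ :=
    (LinearMap.injective_iff_surjective_of_finrank_eq_finrank
      (Subspace.dual_finrank_eq (K := k) (V := R)).symm).mp hinj
  have hmap : Submodule.map Φ (rightIntegrals ε) = Submodule.span k {ε.toLinearMap} := by
    apply le_antisymm
    · rintro f ⟨h, hh, rfl⟩
      rw [Submodule.mem_span_singleton]
      refine ⟨φ h, ?_⟩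
      ext y
      simp [happ, hh y, mul_comm]
    · rw [Submodule.span_le, Set.singleton_subset_iff]
      obtain ⟨h, hh⟩ := hsurj ε.toLinearMap
      refine ⟨h, fun y => ?_, hh⟩
      have key : ∀ x : R, φ ((h * y) * x) = φ ((ε y • h) * x) := by
        intro x
        have h1 : φ (h * (y * x)) = ε (y * x) := LinearMap.congr_fun hh (y * x)
        have h2 : φ (h * x) = ε x := LinearMap.congr_fun hh x
        rw [mul_assoc, h1, map_mul, smul_mul_assoc, map_smul, h2, smul_eq_mul]
      by_contra hne
      obtain ⟨b, hb⟩ := hl _ (sub_ne_zero.mpr hne)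
      apply hb
      rw [sub_mul, map_sub, key b, sub_self]
  have hεne : (ε : R →ₐ[k] k).toLinearMap ≠ 0 := eps_toLinearMap_ne_zero ε
  calc Module.finrank k (rightIntegrals ε)
      = Module.finrank k (Submodule.map Φ (rightIntegrals ε)) :=
        (Submodule.equivMapOfInjective Φ hinj _).finrank_eq
    _ = 1 := by rw [hmap, finrank_span_singleton hεne]

/-- For an augmented Frobenius algebra `R` over a field `k`, the spaces of left and right
integrals with respect to the augmentation are one-dimensional over `k`. -/
theorem integrals_one_dimensional
    [FiniteDimensional k R]
    (hF : ∃ φ : R →ₗ[k] k, IsFrobeniusForm k φ)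
    (ε : R →ₐ[k] k) :
    Module.finrank k (leftIntegrals ε) = 1 ∧
    Module.finrank k (rightIntegrals ε) = 1 := by
  obtain ⟨φ, hl, hr⟩ := hF
  exact ⟨left_integrals_finrank φ hr ε, right_integrals_finrank φ hl ε⟩
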